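/- Define Ψ: ℝ_{>0} → ℝ by Ψ(a) = −Li₂(a) + (1−a)·log(a⁻¹−1) + log a − (1/2)(log a)² + π²/6 for 0 < a < 1, Ψ(1) = 0, and Ψ(a) = Li₂(a⁻¹) − (a−1)·log(1−a⁻¹) + log a − π²/6 for a > 1. Then Ψ is continuous on ℝ_{>0} (in particular Ψ(a) → 0 as a → 1 from either side), Ψ is differentiable at every a ∈ (0,1) ∪ (1,∞), and its derivative there equals Ψ'(a) = (a⁻¹ − 1)·log|a⁻¹ − 1|. -/

import Mathlib

open Real Set

/-- The dilogarithm `Li₂(x) = ∑_{k≥1} x^k / k²`. -/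
noncomputable def Li2 (x : ℝ) : ℝ := ∑' k : ℕ, x ^ (k + 1) / ((k : ℝ) + 1) ^ 2

noncomputable def Ψ (a : ℝ) : ℝ :=
  if a < 1 then
    -Li2 a + (1 - a) * Real.log (a⁻¹ - 1) + Real.log a - (1 / 2) * (Real.log a) ^ 2 + π ^ 2 / 6
  else if a = 1 then 0
  else Li2 a⁻¹ - (a - 1) * Real.log (1 - a⁻¹) + Real.log a - π ^ 2 / 6

lemma li2_summable_aux : Summable (fun k : ℕ => (1 : ℝ) / ((k : ℝ) + 1) ^ 2) := by
  have := ((hasSum_nat_add_iff' 1).mpr hasSum_zeta_two).summable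
  refine this.congr fun n => ?_
  push_cast
  ring_nf

lemma li2_one : Li2 1 = π ^ 2 / 6 := by
  have h := (hasSum_nat_add_iff' (f := fun n : ℕ => (1 : ℝ) / (n : ℝ) ^ 2) 1).mpr hasSum_zeta_two
  simp only [Finset.range_one, Finset.sum_singleton, Nat.cast_zero] at h
  norm_num at h
  have h' : HasSum (fun n : ℕ => (1:ℝ) ^ (n + 1) / ((n : ℝ) + 1) ^ 2) (π ^ 2 / 6) := by
    refine h.congr_fun fun n => ?_
    ring_nf
  exact h'.tsum_eq

lemma li2_contOn : ContinuousOn Li2 (Icc (-1 : ℝ) 1) := by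
  apply continuousOn_tsum (u := fun k : ℕ => (1 : ℝ) / ((k : ℝ) + 1) ^ 2)
    (fun i => (continuousOn_pow _).div_const _) li2_summable_aux
  intro n x hx
  rw [Real.norm_eq_abs, abs_div, abs_of_nonneg (by positivity : (0:ℝ) ≤ ((n:ℝ)+1)^2)]
  apply div_le_div_of_nonneg_right ?_ (by positivity)
  rw [abs_pow]
  calc |x| ^ (n + 1) ≤ 1 ^ (n + 1) := by
        apply pow_le_pow_left₀ (abs_nonneg x) (abs_le.mpr ⟨hx.1, hx.2⟩)
    _ = 1 := one_pow _

lemma li2_hasDeriv {a : ℝ} (ha : 0 < a) (ha1 : a < 1) :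
    HasDerivAt Li2 (-Real.log (1 - a) / a) a := by
  set r : ℝ := (1 + a) / 2 with hr
  have hr1 : r < 1 := by rw [hr]; linarith
  have har : a < r := by rw [hr]; linarith
  have hr0 : 0 < r := by rw [hr]; linarith
  have key : HasDerivAt Li2 (∑' n : ℕ, a ^ n / ((n : ℝ) + 1)) a := by
    apply hasDerivAt_tsum_of_isPreconnected
      (u := fun n : ℕ => r ^ n)
      (g := fun (n : ℕ) (y : ℝ) => y ^ (n + 1) / ((n : ℝ) + 1) ^ 2)
      (g' := fun (n : ℕ) (y : ℝ) => y ^ n / ((n : ℝ) + 1))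
      (summable_geometric_of_lt_one hr0.le hr1) isOpen_Ioo (convex_Ioo _ _).isPreconnected
      (y₀ := 0) (t := Ioo (-r) r)
    · intro n y _
      have h := (hasDerivAt_pow (n + 1) y).div_const (((n : ℝ) + 1) ^ 2)
      convert h using 1
      have hn : ((n : ℝ) + 1) ≠ 0 := by positivity
      push_cast
      rfl
      push_cast
      rw [pow_two, mul_div_mul_left _ _ (by positivity : ((n : ℝ) + 1) ≠ 0)]
    · intro n y hy
      have hyr : |y| ≤ r := by
        rw [abs_le]; exact ⟨hy.1.le, hy.2.le⟩
      rw [Real.norm_eq_abs, abs_div, abs_pow, abs_of_nonneg (by positivity : (0:ℝ) ≤ (n:ℝ)+1)]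
      calc |y| ^ n / ((n : ℝ) + 1) ≤ |y| ^ n / 1 := by
            apply div_le_div_of_nonneg_left (by positivity) one_pos (by norm_num)
        _ = |y| ^ n := div_one _
        _ ≤ r ^ n := pow_le_pow_left₀ (abs_nonneg y) hyr n
    · exact ⟨by linarith, hr0⟩
    · apply summable_of_finite_support
      apply Set.Finite.subset (Set.finite_empty)
      intro n hn
      simp [Function.mem_support] at hn
    · exact ⟨by linarith, har⟩
  have hsum : HasSum (fun n : ℕ => a ^ n / ((n : ℝ) + 1)) (-Real.log (1 - a) / a) := by
    have h := (hasSum_pow_div_log_of_abs_lt_one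
      (by rw [abs_of_pos ha]; exact ha1)).div_const a
    refine h.congr_fun fun n => ?_
    field_simp
    ring
  rwa [hsum.tsum_eq] at key

lemma log_inv_sub_one {a : ℝ} (ha : 0 < a) (ha1 : a < 1) :
    Real.log (a⁻¹ - 1) = Real.log (1 - a) - Real.log a := by
  have : a⁻¹ - 1 = (1 - a) / a := by field_simp
  rw [this, Real.log_div (by linarith) ha.ne']

lemma log_one_sub_inv {a : ℝ} (ha : 1 < a) :
    Real.log (1 - a⁻¹) = Real.log (a - 1) - Real.log a := by
  have h0 : (0:ℝ) < a := by linarith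
  have : 1 - a⁻¹ = (a - 1) / a := by field_simp
  rw [this, Real.log_div (by intro h; nlinarith [sub_eq_zero.mp h]) h0.ne']

lemma psi_deriv :
    ∀ a : ℝ, 0 < a → a ≠ 1 →
      HasDerivAt Ψ ((a⁻¹ - 1) * Real.log |a⁻¹ - 1|) a := by
  intro a ha ha1
  rcases lt_or_gt_of_ne ha1 with h | h
  · -- a < 1
    have hIa : (0:ℝ) < a⁻¹ - 1 := by
      have := (one_lt_inv₀ ha).mpr h
      linarith
    have heq : Ψ =ᶠ[nhds a] fun x =>
        -Li2 x + (1 - x) * Real.log (x⁻¹ - 1) + Real.log x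
          - (1 / 2) * (Real.log x) ^ 2 + π ^ 2 / 6 := by
      filter_upwards [Iio_mem_nhds h] with x hx
      have hx' : x < 1 := hx
      simp only [Ψ, if_pos hx']
    have h1 : HasDerivAt (fun x : ℝ => -Li2 x) (-(-Real.log (1 - a) / a)) a :=
      (li2_hasDeriv ha h).neg
    have hinner : HasDerivAt (fun x : ℝ => x⁻¹ - 1) (-(a ^ 2)⁻¹) a :=
      (hasDerivAt_inv ha.ne').sub_const 1
    have hlog1 : HasDerivAt (fun x : ℝ => Real.log (x⁻¹ - 1))
        ((a⁻¹ - 1)⁻¹ * (-(a ^ 2)⁻¹)) a := by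
      have := (Real.hasDerivAt_log hIa.ne').comp a hinner
      exact this
    have h2 : HasDerivAt (fun x : ℝ => (1 - x) * Real.log (x⁻¹ - 1))
        ((-1) * Real.log (a⁻¹ - 1) + (1 - a) * ((a⁻¹ - 1)⁻¹ * (-(a ^ 2)⁻¹))) a :=
      ((hasDerivAt_id a).const_sub 1).mul hlog1
    have h3 : HasDerivAt (fun x : ℝ => Real.log x) a⁻¹ a := Real.hasDerivAt_log ha.ne'
    have h4 : HasDerivAt (fun x : ℝ => (1 / 2) * (Real.log x) ^ 2)
        ((1 / 2) * (2 * Real.log a ^ 1 * a⁻¹)) a := by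
      exact ((h3.pow 2)).const_mul (1/2)
    have H := (((h1.add h2).add h3).sub h4).add_const (π ^ 2 / 6)
    refine (H.congr_deriv ?_).congr_of_eventuallyEq heq
    rw [abs_of_pos hIa, log_inv_sub_one ha h]
    have hane : a ≠ 0 := ha.ne'
    have h1a : (1 : ℝ) - a ≠ 0 := by intro hc; nlinarith [sub_eq_zero.mp hc]
    field_simp
    ring
  · -- a > 1
    have h0 : (0:ℝ) < a := ha
    have hi0 : 0 < a⁻¹ := inv_pos.mpr h0
    have hi1 : a⁻¹ < 1 := inv_lt_one_of_one_lt₀ h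
    have hIa : (0:ℝ) < 1 - a⁻¹ := by linarith
    have heq : Ψ =ᶠ[nhds a] fun x =>
        Li2 x⁻¹ - (x - 1) * Real.log (1 - x⁻¹) + Real.log x - π ^ 2 / 6 := by
      filter_upwards [Ioi_mem_nhds h] with x hx
      have hx' : (1:ℝ) < x := hx
      simp only [Ψ, if_neg (not_lt.mpr hx'.le), if_neg (ne_of_gt hx')]
    have h1 : HasDerivAt (fun x : ℝ => Li2 x⁻¹)
        ((-Real.log (1 - a⁻¹) / a⁻¹) * (-(a ^ 2)⁻¹)) a :=
      (li2_hasDeriv hi0 hi1).comp a (hasDerivAt_inv h0.ne')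
    have hinner : HasDerivAt (fun x : ℝ => 1 - x⁻¹) (-(-(a ^ 2)⁻¹)) a :=
      (hasDerivAt_inv h0.ne').const_sub 1
    have hlog1 : HasDerivAt (fun x : ℝ => Real.log (1 - x⁻¹))
        ((1 - a⁻¹)⁻¹ * (-(-(a ^ 2)⁻¹))) a := by
      have := (Real.hasDerivAt_log hIa.ne').comp a hinner
      exact this
    have h2 : HasDerivAt (fun x : ℝ => (x - 1) * Real.log (1 - x⁻¹))
        (1 * Real.log (1 - a⁻¹) + (a - 1) * ((1 - a⁻¹)⁻¹ * (-(-(a ^ 2)⁻¹)))) a :=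
      ((hasDerivAt_id a).sub_const 1).mul hlog1
    have h3 : HasDerivAt (fun x : ℝ => Real.log x) a⁻¹ a := Real.hasDerivAt_log h0.ne'
    have H := ((h1.sub h2).add h3).sub_const (π ^ 2 / 6)
    refine (H.congr_deriv ?_).congr_of_eventuallyEq heq
    have habs : |a⁻¹ - 1| = 1 - a⁻¹ := by
      rw [abs_of_neg (by linarith)]; ring
    rw [habs]
    have hane : a ≠ 0 := h0.ne'
    have h1a : (1 : ℝ) - a⁻¹ ≠ 0 := hIa.ne'
    have h2a : a - 1 ≠ 0 := by intro hc; nlinarith [sub_eq_zero.mp hc]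
    rw [log_one_sub_inv h]
    field_simp
    ring

/-- `Ψ` is continuous on `(0,∞)` and differentiable on `(0,1) ∪ (1,∞)` with
derivative `Ψ'(a) = (a⁻¹ − 1)·log|a⁻¹ − 1|`. -/
theorem stmt7 :
    ContinuousOn Ψ (Ioi (0 : ℝ)) ∧
    ∀ a : ℝ, 0 < a → a ≠ 1 →
      HasDerivAt Ψ ((a⁻¹ - 1) * Real.log |a⁻¹ - 1|) a := by
  refine ⟨?_, psi_deriv⟩
  intro a ha
  rcases eq_or_ne a 1 with rfl | ha1
  · -- continuity at 1
    have hsub : Ioi (0:ℝ) ⊆ Ioc 0 1 ∪ Ici 1 := by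
      intro x hx
      rcases le_or_gt x 1 with h | h
      · exact Or.inl ⟨hx, h⟩
      · exact Or.inr h.le
    apply ContinuousWithinAt.mono _ hsub
    apply ContinuousWithinAt.union
    · -- on Ioc 0 1, Ψ = f
      set f : ℝ → ℝ := fun x =>
        -Li2 x + ((1 - x) * Real.log (1 - x) - (1 - x) * Real.log x) + Real.log x
          - (1 / 2) * (Real.log x) ^ 2 + π ^ 2 / 6 with hf
      have hfc : ContinuousWithinAt f (Ioc (0:ℝ) 1) 1 := by
        apply ContinuousWithinAt.add
        apply ContinuousWithinAt.sub
        apply ContinuousWithinAt.add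
        apply ContinuousWithinAt.add
        · exact (((li2_contOn 1 (by norm_num)).mono
            (fun x hx => ⟨by linarith [hx.1], hx.2⟩)).neg)
        · apply ContinuousWithinAt.sub
          · have : ContinuousWithinAt (fun x : ℝ => (1 - x) * Real.log (1 - x))
                (Ioc (0:ℝ) 1) 1 :=
              (Real.continuous_mul_log.comp (continuous_const.sub continuous_id)).continuousWithinAt
            exact this
          · exact (continuous_const.sub continuous_id).continuousWithinAt.mul
              ((Real.continuousAt_log one_ne_zero).continuousWithinAt)
        · exact (Real.continuousAt_log one_ne_zero).continuousWithinAt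
        · exact (((Real.continuousAt_log one_ne_zero).continuousWithinAt).pow 2).const_mul _
        · exact continuousWithinAt_const
      apply hfc.congr
      · intro x hx
        rcases eq_or_lt_of_le hx.2 with rfl | hx1
        · simp only [Ψ, lt_irrefl, if_neg (lt_irrefl (1:ℝ)), if_pos rfl]
          simp [hf, li2_one]
        · simp only [Ψ, if_pos hx1, hf]
          rw [log_inv_sub_one hx.1 hx1]
          ring
      · simp only [Ψ, lt_irrefl, if_neg (lt_irrefl (1:ℝ)), if_pos rfl]
        simp [hf, li2_one]
    · -- on Ici 1, Ψ = g
      set g : ℝ → ℝ := fun x =>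
        Li2 x⁻¹ - ((x - 1) * Real.log (x - 1) - (x - 1) * Real.log x) + Real.log x
          - π ^ 2 / 6 with hg
      have hgc : ContinuousWithinAt g (Ici (1:ℝ)) 1 := by
        apply ContinuousWithinAt.sub
        apply ContinuousWithinAt.add
        apply ContinuousWithinAt.sub
        · have hLi : ContinuousWithinAt Li2 (Icc (-1:ℝ) 1) ((1:ℝ)⁻¹) := by
            simpa using li2_contOn 1 (by norm_num)
          refine ContinuousWithinAt.comp (g := Li2) (f := fun x : ℝ => x⁻¹)
            (s := Ici (1:ℝ)) (t := Icc (-1:ℝ) 1) (x := 1) hLi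
            ((continuousAt_inv₀ one_ne_zero).continuousWithinAt) (fun x hx => ?_)
          simp only [mem_Ici] at hx
          have hx0 : (0:ℝ) < x := by linarith
          constructor
          · have : (0:ℝ) < x⁻¹ := inv_pos.mpr hx0
            linarith
          · exact inv_le_one_of_one_le₀ hx
        · apply ContinuousWithinAt.sub
          · have : ContinuousWithinAt (fun x : ℝ => (x - 1) * Real.log (x - 1))
                (Ici (1:ℝ)) 1 :=
              (Real.continuous_mul_log.comp (continuous_id.sub continuous_const)).continuousWithinAt
            exact this
          · exact (continuous_id.sub continuous_const).continuousWithinAt.mul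
              ((Real.continuousAt_log one_ne_zero).continuousWithinAt)
        · exact (Real.continuousAt_log one_ne_zero).continuousWithinAt
        · exact continuousWithinAt_const
      apply hgc.congr
      · intro x hx
        rcases eq_or_lt_of_le (mem_Ici.mp hx) with rfl | hx1
        · simp only [Ψ, if_neg (lt_irrefl (1:ℝ)), if_pos rfl]
          simp [hg, li2_one]
        · simp only [Ψ, if_neg (not_lt.mpr hx1.le), if_neg (ne_of_gt hx1), hg]
          rw [log_one_sub_inv hx1]
          ring
      · simp only [Ψ, if_neg (lt_irrefl (1:ℝ)), if_pos rfl]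
        simp [hg, li2_one]
  · exact ((psi_deriv a ha ha1).continuousAt).continuousWithinAt
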